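/- Let W be any set and let κ : 𝓡 → W satisfy κ((I, t·e₃)·z) = κ(z) for all t ∈ ℝ and all z ∈ 𝓡 (invariance under the translation part of the stabilizer of η). Let s_a map each unit vector u to an element s_a(u) ∈ SO(3) with s_a(u)·e₃ = u, and define the section s((d,m)) = (s_a(d), d × m). Suppose x = (d_x, m_x) and y = (d_y, m_y) are rays whose underlying lines contain a common point c ∈ ℝ³ (that is, c × d_x = m_x and c × d_y = m_y). Then κ(s(x)⁻¹·y) = κ((s_a(d_x)⁻¹·d_y, 0)); i.e., on rays through a common point the pulled-back kernel argument depends only on the rotated direction s_a(d_x)⁻¹·d_y, so the intra-view ray-space convolution reduces to a spherical convolution. -/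

import Mathlib

noncomputable section
open scoped InnerProductSpace

/-- ℝ³ with the Euclidean norm. -/
abbrev E3 : Type := EuclideanSpace ℝ (Fin 3)

/-- Elements of SE(3): a pair of a 3×3 matrix and a translation vector. -/
abbrev SE3 : Type := Matrix (Fin 3) (Fin 3) ℝ × E3

/-- Matrix-vector multiplication on ℝ³. -/
def mv (R : Matrix (Fin 3) (Fin 3) ℝ) (v : E3) : E3 := WithLp.toLp 2 (R.mulVec v)

/-- Cross product on ℝ³. -/
def cross3 (a b : E3) : E3 :=
  WithLp.toLp 2 ![a 1 * b 2 - a 2 * b 1, a 2 * b 0 - a 0 * b 2, a 0 * b 1 - a 1 * b 0]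

/-- `R` is a special orthogonal 3×3 matrix: `RᵀR = I` and `det R = 1`. -/
def isSO3 (R : Matrix (Fin 3) (Fin 3) ℝ) : Prop :=
  R.transpose * R = 1 ∧ R.det = 1

/-- `(d, m)` are Plücker coordinates of an oriented line: `d` is a unit
direction and `m` is a moment with `⟨d, m⟩ = 0`. -/
def isRay (d m : E3) : Prop := ‖d‖ = 1 ∧ ⟪d, m⟫_ℝ = 0

/-- The standard basis vector e₁. -/
def e1 : E3 := WithLp.toLp 2 ![1, 0, 0]

/-- The standard basis vector e₂. -/
def e2 : E3 := WithLp.toLp 2 ![0, 1, 0]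

/-- The standard basis vector e₃. -/
def e3 : E3 := WithLp.toLp 2 ![0, 0, 1]

/-- Action of `(R, t) ∈ SE(3)` on Plücker coordinates:
`(R,t)·(d,m) = (Rd, Rm + t × (Rd))`. -/
def rayAct (R : Matrix (Fin 3) (Fin 3) ℝ) (t : E3) (d m : E3) : E3 × E3 :=
  (mv R d, mv R m + cross3 t (mv R d))

/-- Multiplication in SE(3): `(R₁,t₁)·(R₂,t₂) = (R₁R₂, t₁ + R₁t₂)`. -/
def se3Mul (g₁ g₂ : SE3) : SE3 := (g₁.1 * g₂.1, g₁.2 + mv g₁.1 g₂.2)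

/-- Inverse in SE(3) (for `g.1 ∈ SO(3)`): `(R,t)⁻¹ = (Rᵀ, -Rᵀt)`. -/
def se3Inv (g : SE3) : SE3 := (g.1.transpose, -(mv g.1.transpose g.2))

/-- Action of `g ∈ SE(3)` on the ray space. -/
def act (g : SE3) (x : E3 × E3) : E3 × E3 := rayAct g.1 g.2 x.1 x.2

/-- Action of `g = (R,t) ∈ SE(3)` on points of ℝ³: `g·p = Rp + t`. -/
def actPt (g : SE3) (p : E3) : E3 := mv g.1 p + g.2

/-- The origin ray `η = (e₃, 0)`. -/
def eta : E3 × E3 := (e3, 0)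

/-- The twist `h(g, x) = s(g·x)⁻¹ · g · s(x)` of a section `s`. -/
def twist (s : E3 × E3 → SE3) (g : SE3) (x : E3 × E3) : SE3 :=
  se3Mul (se3Inv (s (act g x))) (se3Mul g (s x))

/-- Rotation by γ about the z-axis. -/
def RZ (γ : ℝ) : Matrix (Fin 3) (Fin 3) ℝ :=
  !![Real.cos γ, -Real.sin γ, 0; Real.sin γ, Real.cos γ, 0; 0, 0, 1]

/-- Rotation by β about the y-axis. -/
def RY (β : ℝ) : Matrix (Fin 3) (Fin 3) ℝ :=
  !![Real.cos β, 0, Real.sin β; 0, 1, 0; -Real.sin β, 0, Real.cos β]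

/-- The underlying line of the ray with Plücker coordinates `(d, m)`:
`L(d,m) = {p : p × d = m}`. -/
def lineOf (d m : E3) : Set E3 := {p : E3 | cross3 p d = m}

/-- Infimum of the Euclidean distances between points of the line `L(d,m)`
and points of the z-axis. -/
def Dzaxis (d m : E3) : ℝ :=
  sInf {r : ℝ | ∃ p ∈ lineOf d m, ∃ s : ℝ, r = dist p (s • e3)}

/-- The z-coordinate `g(x) = e₃·(c - λ·d)` (with `c = d × m` and
`λ = ((e₁·c)(e₁·d) + (e₂·c)(e₂·d))/(1 - (e₃·d)²)`) of the point of `L(d,m)`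
closest to the z-axis (for `d ≠ ±e₃`). -/
def zfoot (d m : E3) : ℝ :=
  ⟪e3, cross3 d m - ((⟪e1, cross3 d m⟫_ℝ * ⟪e1, d⟫_ℝ + ⟪e2, cross3 d m⟫_ℝ * ⟪e2, d⟫_ℝ)
      / (1 - ⟪e3, d⟫_ℝ ^ 2)) • d⟫_ℝ


/-- Scalar triple product / adjugate polynomial identity. -/
lemma mvT_cross (Q : Matrix (Fin 3) (Fin 3) ℝ) (a b : E3) :
    mv Q.transpose (cross3 (mv Q a) (mv Q b)) = Q.det • cross3 a b := by
  ext i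
  fin_cases i <;>
    simp [mv, cross3, Matrix.mulVec, dotProduct, Fin.sum_univ_three,
      Matrix.det_fin_three, Matrix.transpose_apply] <;> ring

lemma so3_cross {Q : Matrix (Fin 3) (Fin 3) ℝ} (hQ : isSO3 Q) (a b : E3) :
    cross3 (mv Q a) (mv Q b) = mv Q (cross3 a b) := by
  have h1 : Q * Q.transpose = 1 := mul_eq_one_comm.mp hQ.1
  have h := congrArg (mv Q) (mvT_cross Q a b)
  rw [hQ.2, one_smul] at h
  rw [← h]
  simp [mv, Matrix.mulVec_mulVec, h1, Matrix.one_mulVec]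

lemma inner_mv {Q : Matrix (Fin 3) (Fin 3) ℝ} (hQ : Q.transpose * Q = 1) (u v : E3) :
    ⟪mv Q u, mv Q v⟫_ℝ = ⟪u, v⟫_ℝ := by
  have h := fun i j => congrFun (congrFun hQ i) j
  simp only [Matrix.mul_apply, Matrix.transpose_apply, Fin.sum_univ_three] at h
  have h00 := h 0 0; have h01 := h 0 1; have h02 := h 0 2
  have h11 := h 1 1; have h12 := h 1 2; have h22 := h 2 2
  simp [Matrix.one_apply] at h00 h01 h02 h11 h12 h22
  simp only [mv, PiLp.inner_apply, RCLike.inner_apply, conj_trivial,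
    Matrix.mulVec, dotProduct, Fin.sum_univ_three, PiLp.toLp_apply]
  linear_combination (u 0 * v 0) * h00 + (u 0 * v 1 + u 1 * v 0) * h01 +
    (u 0 * v 2 + u 2 * v 0) * h02 + (u 1 * v 1) * h11 +
    (u 1 * v 2 + u 2 * v 1) * h12 + (u 2 * v 2) * h22

lemma cross3_neg_left (a b : E3) : cross3 (-a) b = -cross3 a b := by
  ext i; fin_cases i <;> simp [cross3] <;> ring

lemma cross3_sub_left (a a' b : E3) :
    cross3 (a - a') b = cross3 a b - cross3 a' b := by
  ext i; fin_cases i <;> simp [cross3] <;> ring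

lemma double_cross (dx c : E3) (h : dx 0 ^ 2 + dx 1 ^ 2 + dx 2 ^ 2 = 1) :
    cross3 dx (cross3 c dx) = c - (⟪dx, c⟫_ℝ) • dx := by
  ext i
  fin_cases i
  · simp [cross3, PiLp.inner_apply, Fin.sum_univ_three]; linear_combination (c 0) * h
  · simp [cross3, PiLp.inner_apply, Fin.sum_univ_three]; linear_combination (c 1) * h
  · simp [cross3, PiLp.inner_apply, Fin.sum_univ_three]; linear_combination (c 2) * h

/-- if `κ` is invariant under the translation part of the
stabilizer of `η`, then for rays `x`, `y` through a common point `c`, the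
pulled-back kernel argument depends only on the rotated direction:
`κ(s(x)⁻¹·y) = κ((s_a(d_x)⁻¹·d_y, 0))`. -/
theorem statement17 {W : Type*} (κ : E3 × E3 → W)
    (sa : E3 → Matrix (Fin 3) (Fin 3) ℝ)
    (hsa : ∀ u : E3, ‖u‖ = 1 → isSO3 (sa u) ∧ mv (sa u) e3 = u)
    (hκ : ∀ t : ℝ, ∀ z : E3 × E3, isRay z.1 z.2 → κ (act (1, t • e3) z) = κ z)
    (dx mx dy my : E3) (hx : isRay dx mx) (hy : isRay dy my)
    (c : E3) (hcx : cross3 c dx = mx) (hcy : cross3 c dy = my) :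
    κ (act (se3Inv (sa dx, cross3 dx mx)) (dy, my))
      = κ (mv (sa dx).transpose dy, 0) := by
  obtain ⟨hRso, hRe3⟩ := hsa dx hx.1
  set R := sa dx with hRdef
  have hRtR : R.transpose * R = 1 := hRso.1
  have hRRt : R * R.transpose = 1 := mul_eq_one_comm.mp hRtR
  have hRtSO : isSO3 R.transpose :=
    ⟨by rw [Matrix.transpose_transpose]; exact hRRt,
     by rw [Matrix.det_transpose]; exact hRso.2⟩
  have hRtdx : mv R.transpose dx = e3 := by
    rw [← hRe3]
    simp [mv, Matrix.mulVec_mulVec, hRtR, Matrix.one_mulVec]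
  subst hcx hcy
  set t : ℝ := ⟪dx, c⟫_ℝ with ht
  have hunit : dx 0 ^ 2 + dx 1 ^ 2 + dx 2 ^ 2 = 1 := by
    have := real_inner_self_eq_norm_sq dx
    rw [hx.1] at this
    have h2 : dx 0 * dx 0 + dx 1 * dx 1 + dx 2 * dx 2 = 1 := by
      simpa only [PiLp.inner_apply, RCLike.inner_apply, conj_trivial, Fin.sum_univ_three, one_pow] using this
    linear_combination h2
  have hw : ‖mv R.transpose dy‖ = 1 := by
    have h1 : ⟪mv R.transpose dy, mv R.transpose dy⟫_ℝ = ⟪dy, dy⟫_ℝ :=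
      inner_mv (by rw [Matrix.transpose_transpose]; exact hRRt) dy dy
    rw [real_inner_self_eq_norm_sq, real_inner_self_eq_norm_sq, hy.1] at h1
    nlinarith [norm_nonneg (mv R.transpose dy)]
  have key : act (se3Inv (R, cross3 dx (cross3 c dx))) (dy, cross3 c dy)
      = act ((1 : Matrix (Fin 3) (Fin 3) ℝ), t • e3) (mv R.transpose dy, 0) := by
    simp only [act, rayAct, se3Inv, Matrix.one_mulVec, mv]
    refine Prod.ext ?_ ?_
    · simp [mv, Matrix.one_mulVec]
    · show _ = (0 : E3) + _
      rw [zero_add]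
      have e1' : (WithLp.toLp 2 (R.transpose.mulVec (cross3 c dy)) : E3) = mv R.transpose (cross3 c dy) := rfl
      have e2' : mv R.transpose (cross3 c dy)
          = cross3 (mv R.transpose c) (mv R.transpose dy) := (so3_cross hRtSO c dy).symm
      have e3' : (WithLp.toLp 2 (R.transpose.mulVec (cross3 dx (cross3 c dx))) : E3)
          = mv R.transpose c - t • e3 := by
        show mv R.transpose (cross3 dx (cross3 c dx)) = _
        rw [double_cross dx c hunit, ← ht]
        show (WithLp.toLp 2 (R.transpose.mulVec (c - t • dx)) : E3) = _
        rw [Matrix.mulVec_sub, Matrix.mulVec_smul]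
        show mv R.transpose c - t • mv R.transpose dx = _
        rw [hRtdx]
      rw [e1', e2', e3', cross3_neg_left]
      show cross3 (mv R.transpose c) (mv R.transpose dy)
            + -cross3 (mv R.transpose c - t • e3) (mv R.transpose dy)
          = cross3 (t • e3) (mv R.transpose dy)
      rw [cross3_sub_left]
      abel
  rw [key]
  exact hκ t (mv R.transpose dy, 0) ⟨hw, by simp⟩


end
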